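/- Let ŵ be any weight selection. Then for all functions Q, Q' : Δ(S) × A → ℝ, every constant C ≥ 0 such that |Q(b',a') − Q'(b',a')| ≤ C for every belief b' ∈ Δ(S) and every a' ∈ A, every belief b ∈ Δ(S) and every a ∈ A: |H_ŵ Q(b,a) − H_ŵ Q'(b,a)| ≤ γ·C. In particular H_ŵ (and hence the entropy-based tighter informed bound operator H_EBIB) is a contraction with Lipschitz constant γ with respect to the supremum norm on bounded functions Δ(S) × A → ℝ. -/
import Mathlib


open Finset
open scoped Classical

set_option linter.unusedSectionVars false

/-- A belief (probability distribution) over a finite state space `S`. -/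
structure Belief (S : Type*) [Fintype S] where
  val : S → ℝ
  nonneg : ∀ s, 0 ≤ val s
  sum_one : ∑ s, val s = 1

/-- The convex combination `l • b₁ + (1-l) • b₂` of two beliefs. -/
noncomputable def Belief.mix {S : Type*} [Fintype S] (b₁ b₂ : Belief S) (l : ℝ)
    (h0 : 0 ≤ l) (h1 : l ≤ 1) : Belief S where
  val s := l * b₁.val s + (1 - l) * b₂.val s
  nonneg s := add_nonneg (mul_nonneg h0 (b₁.nonneg s))
    (mul_nonneg (by linarith) (b₂.nonneg s))
  sum_one := by
    rw [Finset.sum_add_distrib, ← Finset.mul_sum, ← Finset.mul_sum, b₁.sum_one, b₂.sum_one]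
    ring

/-- `Q : Δ(S) × A → ℝ` is convex in the belief. -/
def ConvexInBelief {S A : Type*} [Fintype S] (Q : Belief S → A → ℝ) : Prop :=
  ∀ (a : A) (b₁ b₂ : Belief S) (l : ℝ) (h0 : 0 ≤ l) (h1 : l ≤ 1),
    Q (Belief.mix b₁ b₂ l h0 h1) a ≤ l * Q b₁ a + (1 - l) * Q b₂ a

/-- A finite POMDP: transition function `T s a s' = T(s'|s,a)`, observation function
`Z a s' o = Ω(o|a,s')`, rewards `R`, discount `γ ∈ (0,1)`. -/
structure POMDP (S A O : Type*) [Fintype S] [Fintype A] [Fintype O] where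
  T : S → A → S → ℝ
  T_nonneg : ∀ s a s', 0 ≤ T s a s'
  T_sum_one : ∀ s a, ∑ s', T s a s' = 1
  Z : A → S → O → ℝ
  Z_nonneg : ∀ a s' o, 0 ≤ Z a s' o
  Z_sum_one : ∀ a s', ∑ o, Z a s' o = 1
  R : S → A → ℝ
  γ : ℝ
  γ_pos : 0 < γ
  γ_lt_one : γ < 1

namespace POMDP

variable {S A O : Type*} [Fintype S] [Fintype A] [Fintype O] [Nonempty S] [Nonempty A]
  [Nonempty O]
variable (M : POMDP S A O)

/-- `Pr(s',o|s,a)` -/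
def prSO (s : S) (a : A) (s' : S) (o : O) : ℝ := M.Z a s' o * M.T s a s'

lemma prSO_nonneg (s : S) (a : A) (s' : S) (o : O) : 0 ≤ M.prSO s a s' o :=
  mul_nonneg (M.Z_nonneg a s' o) (M.T_nonneg s a s')

/-- `Pr(o|s,a)` -/
def prO (s : S) (a : A) (o : O) : ℝ := ∑ s', M.prSO s a s' o

/-- `Pr(s',o|b,a)` -/
def bprSO (b : Belief S) (a : A) (s' : S) (o : O) : ℝ := ∑ s, b.val s * M.prSO s a s' o

lemma bprSO_nonneg (b : Belief S) (a : A) (s' : S) (o : O) : 0 ≤ M.bprSO b a s' o :=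
  Finset.sum_nonneg fun s _ => mul_nonneg (b.nonneg s) (M.prSO_nonneg s a s' o)

/-- `Pr(o|b,a)` -/
def bprO (b : Belief S) (a : A) (o : O) : ℝ := ∑ s', M.bprSO b a s' o

/-- The unit belief `δ_s`. -/
noncomputable def unit (s : S) : Belief S where
  val s' := if s' = s then 1 else 0
  nonneg s' := by by_cases h : s' = s <;> simp [h]
  sum_one := by simp

/-- The posterior belief `b_{b,a,o}`, defined when `Pr(o|b,a) > 0`. -/
noncomputable def post (b : Belief S) (a : A) (o : O) (h : 0 < M.bprO b a o) : Belief S where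
  val s' := M.bprSO b a s' o / M.bprO b a o
  nonneg s' := div_nonneg (M.bprSO_nonneg b a s' o) h.le
  sum_one := by
    rw [← Finset.sum_div]
    exact div_self (ne_of_gt h)

/-- The one-step belief `b_{s,a,o} = b_{δ_s,a,o}`, defined when `Pr(o|s,a) > 0`. -/
noncomputable def osb (s : S) (a : A) (o : O) (h : 0 < M.prO s a o) : Belief S where
  val s' := M.prSO s a s' o / M.prO s a o
  nonneg s' := div_nonneg (M.prSO_nonneg s a s' o) h.le
  sum_one := by
    unfold prO
    rw [← Finset.sum_div]
    exact div_self (ne_of_gt h)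

/-- Expected reward `R(b,a)`. -/
noncomputable def expR (b : Belief S) (a : A) : ℝ := ∑ s, b.val s * M.R s a

/-- The fast informed bound operator `H_FIB`. -/
noncomputable def HFIB (Q : Belief S → A → ℝ) (b : Belief S) (a : A) : ℝ :=
  M.expR b a + M.γ * ∑ o, Finset.univ.sup' Finset.univ_nonempty
    (fun a' => ∑ s', M.bprSO b a s' o * Q (unit s') a')

/-- The tighter informed bound operator `H_TIB`. -/
noncomputable def HTIB (Q : Belief S → A → ℝ) (b : Belief S) (a : A) : ℝ :=
  M.expR b a + M.γ * ∑ o, Finset.univ.sup' Finset.univ_nonempty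
    (fun a' => ∑ s, if h : 0 < M.prO s a o then
      b.val s * M.prO s a o * Q (M.osb s a o h) a' else 0)

/-- The optimal Bellman operator `H_POMDP`. -/
noncomputable def HPOMDP (Q : Belief S → A → ℝ) (b : Belief S) (a : A) : ℝ :=
  M.expR b a + M.γ * ∑ o, if h : 0 < M.bprO b a o then
    M.bprO b a o * Finset.univ.sup' Finset.univ_nonempty (fun a' => Q (M.post b a o h) a')
  else 0

/-- Index type for the family `B_SAO`: `none` indexes the initial belief `b₀`,
`some (s,a,o)` (with `Pr(o|s,a) > 0`) indexes the one-step belief `b_{s,a,o}`. -/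
abbrev OSIdx : Type _ := Option {x : S × A × O // 0 < M.prO x.1 x.2.1 x.2.2}

/-- The member of the family `B_SAO` (with initial belief `b₀`) at a given index. -/
noncomputable def member (b₀ : Belief S) : M.OSIdx → Belief S
  | none => b₀
  | some x => M.osb x.1.1 x.1.2.1 x.1.2.2 x.2

/-- `w` is a weight function for the belief `tgt` over the family `B_SAO`. -/
def IsWeight (b₀ : Belief S) (tgt : Belief S) (w : M.OSIdx → ℝ) : Prop :=
  (∀ i, 0 ≤ w i) ∧ ∀ s, ∑ i, w i * (M.member b₀ i).val s = tgt.val s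

/-- The optimized tighter informed bound operator `H_OTIB`. -/
noncomputable def HOTIB (b₀ : Belief S) (Q : Belief S → A → ℝ) (b : Belief S) (a : A) : ℝ :=
  M.expR b a + M.γ * ∑ o, if h : 0 < M.bprO b a o then
    Finset.univ.sup' Finset.univ_nonempty (fun a' =>
      M.bprO b a o * ⨅ w : {w : M.OSIdx → ℝ // M.IsWeight b₀ (M.post b a o h) w},
        ∑ i, (w : M.OSIdx → ℝ) i * Q (M.member b₀ i) a')
  else 0

/-- The operator `H_ŵ` induced by a weight selection `W`. -/
noncomputable def Hsel (b₀ : Belief S)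
    (W : ∀ (b : Belief S) (a : A) (o : O), 0 < M.bprO b a o → (M.OSIdx → ℝ))
    (Q : Belief S → A → ℝ) (b : Belief S) (a : A) : ℝ :=
  M.expR b a + M.γ * ∑ o, if h : 0 < M.bprO b a o then
    Finset.univ.sup' Finset.univ_nonempty (fun a' =>
      M.bprO b a o * ∑ i, W b a o h i * Q (M.member b₀ i) a')
  else 0

lemma weight_sum_one {b₀ tgt : Belief S} {w : M.OSIdx → ℝ}
    (hw : M.IsWeight b₀ tgt w) : ∑ i, w i = 1 := by
  have key : ∑ s, ∑ i, w i * (M.member b₀ i).val s = 1 := by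
    simp only [hw.2]; exact tgt.sum_one
  rw [Finset.sum_comm] at key
  calc ∑ i, w i = ∑ i, ∑ s, w i * (M.member b₀ i).val s := by
        refine Finset.sum_congr rfl fun i _ => ?_
        rw [← Finset.mul_sum, (M.member b₀ i).sum_one, mul_one]
    _ = 1 := key

lemma bprO_sum_one (b : Belief S) (a : A) : ∑ o, M.bprO b a o = 1 := by
  unfold bprO bprSO prSO
  rw [Finset.sum_comm]
  calc ∑ s', ∑ o, ∑ s, b.val s * (M.Z a s' o * M.T s a s')
      = ∑ s', ∑ s, b.val s * M.T s a s' := by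
        refine Finset.sum_congr rfl fun s' _ => ?_
        rw [Finset.sum_comm]
        refine Finset.sum_congr rfl fun s _ => ?_
        rw [← Finset.mul_sum]
        have : ∑ o, M.Z a s' o * M.T s a s' = M.T s a s' := by
          rw [← Finset.sum_mul, M.Z_sum_one, one_mul]
        rw [this]
    _ = ∑ s, b.val s := by
        rw [Finset.sum_comm]
        refine Finset.sum_congr rfl fun s _ => ?_
        rw [← Finset.mul_sum, M.T_sum_one, mul_one]
    _ = 1 := b.sum_one

end POMDP

/-- For any weight selection `W`, the induced operator `H_ŵ` (in particular `H_EBIB`)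
contracts sup-distance by a factor `γ`. -/
theorem Hsel_contraction {S A O : Type*} [Fintype S] [Fintype A] [Fintype O]
    [Nonempty S] [Nonempty A] [Nonempty O] (M : POMDP S A O) (b₀ : Belief S)
    (W : ∀ (b : Belief S) (a : A) (o : O), 0 < M.bprO b a o → (M.OSIdx → ℝ))
    (hW : ∀ b a o (h : 0 < M.bprO b a o), M.IsWeight b₀ (M.post b a o h) (W b a o h))
    (Q Q' : Belief S → A → ℝ) (C : ℝ) (hC : 0 ≤ C)
    (h : ∀ (b' : Belief S) (a' : A), |Q b' a' - Q' b' a'| ≤ C)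
    (b : Belief S) (a : A) :
    |M.Hsel b₀ W Q b a - M.Hsel b₀ W Q' b a| ≤ M.γ * C := by
  set F : O → ℝ := fun o => if h : 0 < M.bprO b a o then
    Finset.univ.sup' Finset.univ_nonempty (fun a' =>
      M.bprO b a o * ∑ i, W b a o h i * Q (M.member b₀ i) a') else 0 with hF
  set G : O → ℝ := fun o => if h : 0 < M.bprO b a o then
    Finset.univ.sup' Finset.univ_nonempty (fun a' =>
      M.bprO b a o * ∑ i, W b a o h i * Q' (M.member b₀ i) a') else 0 with hG
  have hdiff : M.Hsel b₀ W Q b a - M.Hsel b₀ W Q' b a = M.γ * (∑ o, F o - ∑ o, G o) := by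
    unfold POMDP.Hsel; rw [hF, hG]; ring
  rw [hdiff, abs_mul, abs_of_pos M.γ_pos]
  refine mul_le_mul_of_nonneg_left ?_ M.γ_pos.le
  rw [← Finset.sum_sub_distrib]
  refine le_trans (Finset.abs_sum_le_sum_abs _ _) ?_
  have key : ∀ o, |F o - G o| ≤ M.bprO b a o * C := by
    intro o
    by_cases ho : 0 < M.bprO b a o
    · simp only [hF, hG, dif_pos ho]
      have hpt : ∀ a' : A,
          |M.bprO b a o * ∑ i, W b a o ho i * Q (M.member b₀ i) a' -
           M.bprO b a o * ∑ i, W b a o ho i * Q' (M.member b₀ i) a'| ≤ M.bprO b a o * C := by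
        intro a'
        rw [← mul_sub, ← Finset.sum_sub_distrib, abs_mul, abs_of_pos ho]
        refine mul_le_mul_of_nonneg_left ?_ ho.le
        refine le_trans (Finset.abs_sum_le_sum_abs _ _) ?_
        calc ∑ i, |W b a o ho i * Q (M.member b₀ i) a' - W b a o ho i * Q' (M.member b₀ i) a'|
            ≤ ∑ i, W b a o ho i * C := by
              refine Finset.sum_le_sum fun i _ => ?_
              rw [← mul_sub, abs_mul, abs_of_nonneg ((hW b a o ho).1 i)]
              exact mul_le_mul_of_nonneg_left (h _ _) ((hW b a o ho).1 i)
          _ = C := by rw [← Finset.sum_mul, M.weight_sum_one (hW b a o ho), one_mul]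
      rw [abs_sub_le_iff]
      constructor
      · rw [sub_le_iff_le_add]
        refine Finset.sup'_le _ _ fun a' _ => ?_
        have h1 := (abs_sub_le_iff.mp (hpt a')).1
        have h2 := Finset.le_sup' (fun a' =>
          M.bprO b a o * ∑ i, W b a o ho i * Q' (M.member b₀ i) a') (Finset.mem_univ a')
        linarith
      · rw [sub_le_iff_le_add]
        refine Finset.sup'_le _ _ fun a' _ => ?_
        have h1 := (abs_sub_le_iff.mp (hpt a')).2
        have h2 := Finset.le_sup' (fun a' =>
          M.bprO b a o * ∑ i, W b a o ho i * Q (M.member b₀ i) a') (Finset.mem_univ a')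
        linarith
    · simp only [hF, hG, dif_neg ho, sub_zero, abs_zero]
      exact mul_nonneg (Finset.sum_nonneg fun s' _ => M.bprSO_nonneg b a s' o) hC
  calc ∑ o, |F o - G o| ≤ ∑ o, M.bprO b a o * C := Finset.sum_le_sum fun o _ => key o
    _ = C := by rw [← Finset.sum_mul, M.bprO_sum_one, one_mul]
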